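/- Let n, d, j be natural numbers with d ≥ 1, 0 ≤ j < d, and n ≥ 2d − 1. Then in the polynomial ring (MvPolynomial (Fin N) (ZMod 2))[c] (polynomials in one variable c with coefficients in MvPolynomial (Fin N) (ZMod 2)), there exists a polynomial r with degree in c strictly less than n − d such that (Σ_{k=0}^{d−j−1} h_k·c^{d−j−1−k}) · (Σ_{k=0}^{d} e_k·c^{n−d+1−k}) = c^{n−j} + h_{d−j}·c^{n−d} + r. In other words, modulo the relation Σ_{k=0}^{d} e_k·c^{n−d+1−k} = 0, the monomial c^{n−j} equals h_{d−j}·c^{n−d} plus terms of lower degree in c. -/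

import Mathlib

open Finset MvPolynomial Polynomial

abbrev R2 (N : ℕ) := MvPolynomial (Fin N) (ZMod 2)
lemma geom (N : ℕ) (x : R2 N) :
    (1 + PowerSeries.C x * PowerSeries.X) * PowerSeries.mk (fun n => x ^ n) = 1 := by
  ext m
  cases m with
  | zero => simp
  | succ m =>
    rw [add_mul, one_mul, mul_assoc, map_add, PowerSeries.coeff_C_mul,
      PowerSeries.coeff_succ_X_mul, PowerSeries.coeff_mk, PowerSeries.coeff_mk,
      ← pow_succ', PowerSeries.coeff_one, if_neg (Nat.succ_ne_zero m)]
    exact CharTwo.add_self_eq_zero _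

lemma mprod (N : ℕ) (μ : Multiset (Fin N)) :
    ((μ.map (MvPolynomial.X : Fin N → R2 N)).prod) = ∏ i : Fin N, (MvPolynomial.X i : R2 N) ^ μ.count i := by
  rw [Finset.prod_multiset_map_count]
  apply Finset.prod_subset (Finset.subset_univ _)
  intro i _ hi
  rw [Multiset.count_eq_zero_of_notMem (by simpa using hi), pow_zero]

lemma hprod (N : ℕ) :
    ∏ i : Fin N, PowerSeries.mk (fun n => (MvPolynomial.X i : R2 N) ^ n) =
      PowerSeries.mk (fun m => hsymm (Fin N) (ZMod 2) m) := by
  refine PowerSeries.ext fun m => ?_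
  rw [PowerSeries.coeff_prod, PowerSeries.coeff_mk]
  simp only [PowerSeries.coeff_mk]
  rw [hsymm]
  have hcard : ∀ l ∈ Finset.finsuppAntidiag (Finset.univ : Finset (Fin N)) m,
      Multiset.card (Finsupp.toMultiset l) = m := by
    intro l hl
    rw [Finsupp.card_toMultiset]
    rw [Finset.mem_finsuppAntidiag] at hl
    rw [Finsupp.sum_of_support_subset _ hl.2 _ (fun _ _ => rfl)]
    exact hl.1
  refine Finset.sum_bij' (fun l hl => (⟨Finsupp.toMultiset l, hcard l hl⟩ : Sym (Fin N) m))
    (fun s _ => Multiset.toFinsupp s.1) ?_ ?_ ?_ ?_ ?_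
  · intro l hl; exact Finset.mem_univ _
  · intro s hs
    rw [Finset.mem_finsuppAntidiag]
    constructor
    · have := s.2
      change ∑ i : Fin N, s.1.count i = m
      calc ∑ i : Fin N, s.1.count i = ∑ i ∈ s.1.toFinset, s.1.count i := by
              symm; apply Finset.sum_subset (Finset.subset_univ _)
              intro i _ hi
              exact Multiset.count_eq_zero_of_notMem (by simpa using hi)
        _ = Multiset.card s.1 := Multiset.toFinset_sum_count_eq s.1
        _ = m := s.2
    · exact Finset.subset_univ _
  · intro l hl; simp
  · intro s hs
    exact Subtype.ext (by simp)
  · intro l hl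
    simp only
    rw [mprod]
    apply Finset.prod_congr rfl
    intro i _
    rw [Finsupp.count_toMultiset]

lemma reverse_prod {R : Type*} [CommRing R] [IsDomain R] {ι : Type*} (s : Finset ι)
    (f : ι → Polynomial R) :
    (∏ i ∈ s, f i).reverse = ∏ i ∈ s, (f i).reverse := by
  classical
  induction s using Finset.induction with
  | empty => simp [Polynomial.reverse]
  | insert _ _ h ih => rw [Finset.prod_insert h, Finset.prod_insert h, reverse_mul_of_domain, ih]

lemma reverse_X_add_C {R : Type*} [CommRing R] [Nontrivial R] (t : R) :
    (Polynomial.X + Polynomial.C t).reverse = 1 + Polynomial.C t * Polynomial.X := by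
  rw [reverse_add_C, natDegree_X]
  have : (Polynomial.X : Polynomial R).reverse = 1 := by
    rw [← one_mul (Polynomial.X : Polynomial R), reverse_mul_X, ← Polynomial.C_1, reverse_C,
      Polynomial.C_1]
  rw [this, pow_one]

lemma ecoeff (N k : ℕ) :
    (∏ i : Fin N, (1 + Polynomial.C (MvPolynomial.X i) * Polynomial.X) :
      Polynomial (R2 N)).coeff k = esymm (Fin N) (ZMod 2) k := by
  have h1 : (∏ i : Fin N, (1 + Polynomial.C (MvPolynomial.X i) * Polynomial.X) :
      Polynomial (R2 N)) =
      ((∏ i : Fin N, (Polynomial.X + Polynomial.C (MvPolynomial.X i)) :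
        Polynomial (R2 N))).reverse := by
    rw [reverse_prod]
    exact Finset.prod_congr rfl fun i _ => (reverse_X_add_C _).symm
  have hdeg : (∏ i : Fin N, (Polynomial.X + Polynomial.C (MvPolynomial.X i)) :
      Polynomial (R2 N)).natDegree = N := by
    rw [natDegree_prod_of_monic _ _ (fun i _ => monic_X_add_C _)]
    simp
  have huniv : #(Finset.univ : Finset (Fin N)) = N := by simp
  rcases le_or_gt k N with hk | hk
  · rw [h1, coeff_reverse, hdeg, revAt_le hk,
      Finset.prod_X_add_C_coeff _ _ (by rw [huniv]; omega), esymm]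
    have h2 : #(Finset.univ : Finset (Fin N)) - (N - k) = k := by rw [huniv]; omega
    rw [h2]
  · rw [h1, coeff_eq_zero_of_natDegree_lt
      (lt_of_le_of_lt (le_trans (reverse_natDegree_le _) hdeg.le) hk), esymm,
      Finset.powersetCard_eq_empty.mpr (by omega), Finset.sum_empty]

lemma key (N m : ℕ) (hm : m ≠ 0) :
    ∑ ab ∈ Finset.HasAntidiagonal.antidiagonal m,
      hsymm (Fin N) (ZMod 2) ab.1 * esymm (Fin N) (ZMod 2) ab.2 = 0 := by
  have h1 : (PowerSeries.mk fun k => hsymm (Fin N) (ZMod 2) k) *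
      ((∏ i : Fin N, (1 + Polynomial.C (MvPolynomial.X i) * Polynomial.X) :
        Polynomial (R2 N)) : PowerSeries (R2 N)) = 1 := by
    have hcoe : ∀ (s : Finset (Fin N)) (f : Fin N → Polynomial (R2 N)),
        ((∏ i ∈ s, f i : Polynomial (R2 N)) : PowerSeries (R2 N)) =
          ∏ i ∈ s, ((f i : Polynomial (R2 N)) : PowerSeries (R2 N)) := by
      intro s f
      classical
      induction s using Finset.induction with
      | empty => simp
      | insert _ _ h ih => rw [Finset.prod_insert h, Finset.prod_insert h, Polynomial.coe_mul, ih]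
    rw [hcoe]
    simp only [Polynomial.coe_add, Polynomial.coe_one, Polynomial.coe_mul, Polynomial.coe_C,
      Polynomial.coe_X]
    rw [← hprod, ← Finset.prod_mul_distrib]
    rw [Finset.prod_congr rfl fun i _ => by rw [mul_comm, geom]]
    exact Finset.prod_const_one
  have h2 := congrArg (PowerSeries.coeff m) h1
  rw [PowerSeries.coeff_mul, PowerSeries.coeff_one, if_neg hm] at h2
  rw [← h2]
  apply Finset.sum_congr rfl
  intro ab _
  rw [PowerSeries.coeff_mk, Polynomial.coeff_coe, ecoeff]

lemma key' (N m : ℕ) (hm : m ≠ 0) :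
    ∑ a ∈ Finset.range (m+1),
      hsymm (Fin N) (ZMod 2) a * esymm (Fin N) (ZMod 2) (m - a) = 0 := by
  rw [← Finset.Nat.sum_antidiagonal_eq_sum_range_succ_mk
    (fun ab => hsymm (Fin N) (ZMod 2) ab.1 * esymm (Fin N) (ZMod 2) ab.2)]
  exact key N m hm

lemma coeff_sum_rev {N : ℕ} (s : ℕ) (f : ℕ → R2 N) (u : ℕ) :
    (∑ k ∈ Finset.range (s+1), Polynomial.C (f k) * Polynomial.X ^ (s-k)).coeff u =
      if u ≤ s then f (s - u) else 0 := by
  rw [Polynomial.finset_sum_coeff]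
  simp only [Polynomial.coeff_C_mul, Polynomial.coeff_X_pow]
  rcases le_or_gt u s with h | h
  · rw [if_pos h, Finset.sum_eq_single_of_mem (s-u) (Finset.mem_range.mpr (by omega))]
    · rw [if_pos (by omega), mul_one]
    · intro k hk hne
      rw [Finset.mem_range] at hk
      rw [if_neg (by omega), mul_zero]
  · rw [if_neg (by omega)]
    apply Finset.sum_eq_zero
    intro k hk
    rw [Finset.mem_range] at hk
    rw [if_neg (by omega), mul_zero]

lemma core (N s d : ℕ) (hsd : s < d) (t : ℕ) (ht : d - 1 ≤ t) :
    ((∑ k ∈ Finset.range (s+1),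
        Polynomial.C (hsymm (Fin N) (ZMod 2) k) * Polynomial.X ^ (s-k)) *
     (∑ k ∈ Finset.range (d+1),
        Polynomial.C (esymm (Fin N) (ZMod 2) k) * Polynomial.X ^ (d-k))).coeff t
    = (Polynomial.X ^ (s+d) +
        Polynomial.C (hsymm (Fin N) (ZMod 2) (s+1)) * Polynomial.X ^ (d-1) :
          Polynomial (R2 N)).coeff t := by
  rw [Polynomial.coeff_mul, Finset.Nat.sum_antidiagonal_eq_sum_range_succ_mk,
    Polynomial.coeff_add, Polynomial.coeff_X_pow, Polynomial.coeff_C_mul,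
    Polynomial.coeff_X_pow]
  simp only [coeff_sum_rev]
  rcases lt_or_ge (s + d) t with hbig | hsmall
  · rw [if_neg (by omega), if_neg (by omega), mul_zero, add_zero]
    apply Finset.sum_eq_zero
    intro u hu
    rw [Finset.mem_range] at hu
    rcases le_or_gt u s with h1 | h1
    · rw [if_pos h1, if_neg (by omega), mul_zero]
    · rw [if_neg (by omega), zero_mul]
  rcases eq_or_lt_of_le hsmall with heq | hlt
  · -- t = s + d
    rw [if_pos (by omega), if_neg (by omega), mul_zero, add_zero]
    rw [Finset.sum_eq_single_of_mem s (Finset.mem_range.mpr (by omega))]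
    · rw [if_pos le_rfl, if_pos (by omega), Nat.sub_self, hsymm_zero,
        show d - (t - s) = 0 by omega, esymm_zero, one_mul]
    · intro u hu hne
      rw [Finset.mem_range] at hu
      rcases le_or_gt u s with h1 | h1
      · rw [if_pos h1, if_neg (by omega), mul_zero]
      · rw [if_neg (by omega), zero_mul]
  · -- d - 1 ≤ t < s + d
    rw [if_neg (by omega), zero_add]
    have hst : s ≤ t := by omega
    have step1 : ∑ u ∈ Finset.range (t+1),
        (if u ≤ s then hsymm (Fin N) (ZMod 2) (s - u) else 0) *
        (if t - u ≤ d then esymm (Fin N) (ZMod 2) (d - (t - u)) else 0) =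
        ∑ u ∈ Finset.Ico (t-d) (s+1),
        (if u ≤ s then hsymm (Fin N) (ZMod 2) (s - u) else 0) *
        (if t - u ≤ d then esymm (Fin N) (ZMod 2) (d - (t - u)) else 0) := by
      symm
      apply Finset.sum_subset
      · intro u hu
        rw [Finset.mem_Ico] at hu
        rw [Finset.mem_range]
        omega
      · intro u hu hnot
        rw [Finset.mem_range] at hu
        rw [Finset.mem_Ico, not_and_or] at hnot
        rcases le_or_gt u s with h1 | h1
        · rw [if_pos h1, if_neg (by omega), mul_zero]
        · rw [if_neg (by omega), zero_mul]
    rw [step1]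
    set m := s + d - t with hm
    have step2 : ∑ u ∈ Finset.Ico (t-d) (s+1),
        (if u ≤ s then hsymm (Fin N) (ZMod 2) (s - u) else 0) *
        (if t - u ≤ d then esymm (Fin N) (ZMod 2) (d - (t - u)) else 0) =
        ∑ a ∈ Finset.range (s + 1 - (t - d)),
          hsymm (Fin N) (ZMod 2) a * esymm (Fin N) (ZMod 2) (m - a) := by
      refine Finset.sum_nbij' (fun u => s - u) (fun a => s - a) ?_ ?_ ?_ ?_ ?_
      · intro u hu; simp only [Finset.mem_Ico, Finset.mem_range] at hu ⊢; omega
      · intro a ha; simp only [Finset.mem_Ico, Finset.mem_range] at ha ⊢; omega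
      · intro u hu; simp only [Finset.mem_Ico] at hu; omega
      · intro a ha; simp only [Finset.mem_range] at ha; omega
      · intro u hu
        simp only [Finset.mem_Ico] at hu
        rw [if_pos (by omega), if_pos (by omega), show d - (t - u) = m - (s - u) by omega]
    rw [step2]
    rcases eq_or_ne t (d-1) with htd | htd
    · -- m = s + 1
      rw [if_pos htd, mul_one]
      have hk := key' N m (by omega)
      rw [Finset.sum_range_succ, show m - m = 0 by omega, esymm_zero, mul_one,
        add_eq_zero_iff_eq_neg] at hk
      rw [show s + 1 - (t - d) = m by omega, hk, CharTwo.neg_eq,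
        show m = s + 1 by omega]
    · rw [if_neg htd, mul_zero, show s + 1 - (t - d) = m + 1 by omega]
      exact key' N m (by omega)

lemma core_ex (N s d : ℕ) (hsd : s < d) :
    ∃ r₀ : Polynomial (R2 N), r₀.degree < ((d - 1 : ℕ) : WithBot ℕ) ∧
    (∑ k ∈ Finset.range (s+1),
        Polynomial.C (hsymm (Fin N) (ZMod 2) k) * Polynomial.X ^ (s-k)) *
     (∑ k ∈ Finset.range (d+1),
        Polynomial.C (esymm (Fin N) (ZMod 2) k) * Polynomial.X ^ (d-k)) =
      Polynomial.X ^ (s+d) +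
        Polynomial.C (hsymm (Fin N) (ZMod 2) (s+1)) * Polynomial.X ^ (d-1) + r₀ := by
  refine ⟨(∑ k ∈ Finset.range (s+1),
        Polynomial.C (hsymm (Fin N) (ZMod 2) k) * Polynomial.X ^ (s-k)) *
     (∑ k ∈ Finset.range (d+1),
        Polynomial.C (esymm (Fin N) (ZMod 2) k) * Polynomial.X ^ (d-k)) -
      (Polynomial.X ^ (s+d) +
      Polynomial.C (hsymm (Fin N) (ZMod 2) (s+1)) * Polynomial.X ^ (d-1)), ?_, by ring⟩
  rw [Polynomial.degree_lt_iff_coeff_zero]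
  intro t ht
  rw [Polynomial.coeff_sub, core N s d hsd t ht, sub_self]

theorem stmt_8 (N n d j : ℕ) (hd : 1 ≤ d) (hj : j < d) (hn : 2 * d - 1 ≤ n) :
    ∃ r : Polynomial (MvPolynomial (Fin N) (ZMod 2)),
      r.degree < ((n - d : ℕ) : WithBot ℕ) ∧
      (∑ k ∈ Finset.range (d - j),
          Polynomial.C (MvPolynomial.hsymm (Fin N) (ZMod 2) k) *
            Polynomial.X ^ (d - j - 1 - k)) *
        (∑ k ∈ Finset.range (d + 1),
          Polynomial.C (MvPolynomial.esymm (Fin N) (ZMod 2) k) *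
            Polynomial.X ^ (n - d + 1 - k)) =
      Polynomial.X ^ (n - j) +
        Polynomial.C (MvPolynomial.hsymm (Fin N) (ZMod 2) (d - j)) *
          Polynomial.X ^ (n - d) + r := by
  obtain ⟨r₀, hdeg, heq⟩ := core_ex N (d - j - 1) d (by omega)
  refine ⟨Polynomial.X ^ (n + 1 - 2*d) * r₀, ?_, ?_⟩
  · rcases eq_or_ne r₀ 0 with rfl | h0
    · rw [mul_zero, Polynomial.degree_zero]
      exact WithBot.bot_lt_coe _
    calc (Polynomial.X ^ (n+1-2*d) * r₀).degree
        = ((n+1-2*d : ℕ) : WithBot ℕ) + r₀.degree := by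
          rw [Polynomial.degree_mul, Polynomial.degree_X_pow]
      _ < ((n+1-2*d : ℕ) : WithBot ℕ) + ((d-1 : ℕ) : WithBot ℕ) :=
          WithBot.add_lt_add_left (WithBot.coe_ne_bot) hdeg
      _ = ((n - d : ℕ) : WithBot ℕ) := by
          rw [← Nat.cast_add]
          congr 1
          omega
  · have hQ : (∑ k ∈ Finset.range (d+1),
        Polynomial.C (MvPolynomial.esymm (Fin N) (ZMod 2) k) *
          Polynomial.X ^ (n - d + 1 - k)) =
        Polynomial.X ^ (n+1-2*d) * ∑ k ∈ Finset.range (d+1),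
          Polynomial.C (MvPolynomial.esymm (Fin N) (ZMod 2) k) * Polynomial.X ^ (d - k) := by
      rw [Finset.mul_sum]
      refine Finset.sum_congr rfl fun k hk => ?_
      rw [Finset.mem_range] at hk
      rw [show n - d + 1 - k = (n+1-2*d) + (d - k) by omega, pow_add]
      ring
    rw [hQ, show d - j = (d - j - 1) + 1 from by omega]
    simp only [Nat.add_sub_cancel]
    rw [show n - j = (n+1-2*d) + ((d-j-1) + d) by omega,
      show n - d = (n+1-2*d) + (d-1) by omega, pow_add, pow_add,
      mul_left_comm, heq]
    ring
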